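/- Let A be a finite structure with binary relations f and R satisfying T1[f] and the induction principle (for all first-order definable predicates; it suffices to assume it for all predicates P : V → Prop). Then R equals the reflexive transitive closure of f. -/
import Mathlib

theorem stmt_11 {V : Type*} [Fintype V] [Nonempty V] (f R : V → V → Prop)
    (hT1 : ∀ u v : V, R u v ↔ (u = v ∨ ∃ w, f u w ∧ R w v))
    (hInd : ∀ (P : V → Prop) (z : V),
      (P z ∧ ∀ u v, P u → f u v → P v) → ∀ u, R z u → P u) :
    ∀ u v : V, R u v ↔ Relation.ReflTransGen f u v := by
  intro u v
  constructor
  · intro h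
    exact hInd (fun x => Relation.ReflTransGen f u x) u
      ⟨Relation.ReflTransGen.refl, fun a b ha hab => ha.tail hab⟩ v h
  · intro h
    induction h using Relation.ReflTransGen.head_induction_on with
    | refl => exact (hT1 v v).mpr (Or.inl rfl)
    | head hfw _ ih => exact (hT1 _ v).mpr (Or.inr ⟨_, hfw, ih⟩)
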